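/- arXiv:2404.07830 — 4 statements merged into one kernel-verified Lean document; each statement's English description precedes it below -/
import Mathlib

section
/- Let m ≥ 1 be a natural number, γ > 1, K > 0, ρ_c > 0, b > 0, v_a > 0 with D := √(Kγ)·√(ρ_c^{γ-1} - ((γ-1)/(2Kγ))b²) > 0 and v_a·b > (m+1)·D. Then v_a + (Kγ)^{-1/2}(ρ_c^{γ-1} - ((γ-1)/(2Kγ))b²)^{-1/2}·b - (m/b)·(v_a b·D)/(v_a b - D) > v_a·(v_a b - (m+1)D)/(v_a b - D) ≥ 0. -/
theorem beta_at_b_positive (m : ℕ) (γ K ρc b va D : ℝ)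
    (hm : 1 ≤ m) (hγ : 1 < γ) (hK : 0 < K) (hρc : 0 < ρc) (hb : 0 < b) (hva : 0 < va)
    (hD : D = Real.sqrt (K * γ) *
      Real.sqrt (ρc ^ (γ - 1) - ((γ - 1) / (2 * K * γ)) * b ^ 2))
    (hDpos : 0 < D)
    (hvb : (m + 1 : ℝ) * D < va * b) :
    va + (K * γ) ^ (-(1 : ℝ) / 2) *
        (ρc ^ (γ - 1) - ((γ - 1) / (2 * K * γ)) * b ^ 2) ^ (-(1 : ℝ) / 2) * b -
      ((m : ℝ) / b) * (va * b * D) / (va * b - D) >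
      va * (va * b - (m + 1 : ℝ) * D) / (va * b - D) ∧
    va * (va * b - (m + 1 : ℝ) * D) / (va * b - D) ≥ 0 := by
  set E := ρc ^ (γ - 1) - ((γ - 1) / (2 * K * γ)) * b ^ 2 with hE
  have hKγ : 0 < K * γ := mul_pos hK (lt_trans one_pos hγ)
  have hEpos : 0 < E := by
    by_contra h
    push_neg at h
    rw [hD, Real.sqrt_eq_zero_of_nonpos h, mul_zero] at hDpos
    exact lt_irrefl 0 hDpos
  have hterm : 0 < (K * γ) ^ (-(1 : ℝ) / 2) * E ^ (-(1 : ℝ) / 2) * b :=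
    mul_pos (mul_pos (Real.rpow_pos_of_pos hKγ _) (Real.rpow_pos_of_pos hEpos _)) hb
  have hden : 0 < va * b - D := by nlinarith [hDpos, hvb, (by exact_mod_cast hm : (1:ℝ) ≤ (m:ℝ))]
  have hnum : 0 < va * b - (m + 1 : ℝ) * D := by linarith
  have hkey : va - ((m : ℝ) / b) * (va * b * D) / (va * b - D)
      = va * (va * b - (m + 1 : ℝ) * D) / (va * b - D) := by
    field_simp
    ring
  constructor
  · have : va + (K * γ) ^ (-(1 : ℝ) / 2) * E ^ (-(1 : ℝ) / 2) * b -
        ((m : ℝ) / b) * (va * b * D) / (va * b - D)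
        = va * (va * b - (m + 1 : ℝ) * D) / (va * b - D) +
          (K * γ) ^ (-(1 : ℝ) / 2) * E ^ (-(1 : ℝ) / 2) * b := by
      rw [← hkey]; ring
    rw [this]
    linarith
  · positivity
end

section
/- Let 1 < γ ≤ 3, C₀ > 0, and suppose (w,z) : Ω → ℝ² are C¹ functions on a domain Ω ⊂ ℝ² satisfying ∂_t z + c₁ ∂_r z = (m/r)uh and z ≥ 0 on the parabolic boundary (initial line and inflow boundary), where u = (w+z)/2 ≥ 0, h = ((γ-1)/4)(w-z) ≥ 0, c₁ = u - h, r ≥ b > 0, and m ≥ 1. If 1-characteristics through every point of Ω can be traced backward to the parabolic boundary, then z ≥ 0 throughout Ω. -/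
theorem riemann_invariant_z_nonneg (γ m b : ℝ)
    (hγ1 : 1 < γ) (hγ3 : γ ≤ 3) (hm : 1 ≤ m) (hb : 0 < b)
    (Ω B : Set (ℝ × ℝ))
    (W Z U H C₁ : ℝ × ℝ → ℝ) (DZ : ℝ × ℝ → ℝ × ℝ →L[ℝ] ℝ)
    -- definitions of u, h, c₁ from the Riemann invariants
    (hU : ∀ p, U p = (W p + Z p) / 2)
    (hH : ∀ p, H p = ((γ - 1) / 4) * (W p - Z p))
    (hC₁ : ∀ p, C₁ p = U p - H p)
    -- sign conditions on u, h and the spatial constraint r ≥ b > 0 on Ω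
    (hUpos : ∀ p ∈ Ω, 0 ≤ U p)
    (hHpos : ∀ p ∈ Ω, 0 ≤ H p)
    (hrb : ∀ p ∈ Ω, b ≤ p.1)
    -- Z is C¹ (differentiable) on Ω and satisfies the PDE ∂_t z + c₁ ∂_r z = (m/r) u h
    (hZdiff : ∀ p ∈ Ω, HasFDerivAt Z (DZ p) p)
    (hPDE : ∀ p ∈ Ω, DZ p (C₁ p, 1) = (m / p.1) * U p * H p)
    -- z ≥ 0 on the parabolic boundary B
    (hBnd : ∀ p ∈ B, 0 ≤ Z p)
    -- every point of Ω can be traced backward along a 1-characteristic to B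
    (hchar : ∀ p ∈ Ω, ∃ (t₀ : ℝ) (η : ℝ → ℝ), t₀ ≤ p.2 ∧ η p.2 = p.1 ∧
      (η t₀, t₀) ∈ B ∧
      ContinuousOn (fun s => Z (η s, s)) (Set.Icc t₀ p.2) ∧
      ∀ s ∈ Set.Ioc t₀ p.2, (η s, s) ∈ Ω ∧ HasDerivAt η (C₁ (η s, s)) s) :
    ∀ p ∈ Ω, 0 ≤ Z p := by
  intro p hp
  obtain ⟨t₀, η, ht₀, hηp, hB, hcont, hs⟩ := hchar p hp
  rcases eq_or_lt_of_le ht₀ with heq | hlt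
  · have hpe : p = (η t₀, t₀) := by
      rw [heq, hηp]
    rw [hpe]
    exact hBnd _ hB
  · -- g s = Z (η s, s) has nonneg derivative on Ioo t₀ p.2
    set g : ℝ → ℝ := fun s => Z (η s, s) with hg
    have hderiv : ∀ s ∈ Set.Ioc t₀ p.2,
        HasDerivAt g ((m / (η s)) * U (η s, s) * H (η s, s)) s := by
      intro s hsmem
      obtain ⟨hΩ, hη⟩ := hs s hsmem
      have hcurve : HasDerivAt (fun s => ((η s, s) : ℝ × ℝ)) (C₁ (η s, s), 1) s :=
        hη.prodMk (hasDerivAt_id s)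
      have := HasFDerivAt.comp_hasDerivAt (f := fun s => ((η s, s) : ℝ × ℝ)) s (hZdiff _ hΩ) hcurve
      have hval : DZ (η s, s) (C₁ (η s, s), 1) = (m / (η s)) * U (η s, s) * H (η s, s) :=
        hPDE _ hΩ
      rwa [hval] at this
    have hmono : MonotoneOn g (Set.Icc t₀ p.2) := by
      apply monotoneOn_of_deriv_nonneg (convex_Icc t₀ p.2) hcont
      · rw [interior_Icc]
        intro s hsmem
        exact (hderiv s (Set.Ioo_subset_Ioc_self hsmem)).differentiableAt.differentiableWithinAt
      · rw [interior_Icc]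
        intro s hsmem
        have hd := hderiv s (Set.Ioo_subset_Ioc_self hsmem)
        rw [hd.deriv]
        have hΩ := (hs s (Set.Ioo_subset_Ioc_self hsmem)).1
        have hr : (0:ℝ) < η s := lt_of_lt_of_le hb (hrb _ hΩ)
        have hm0 : (0:ℝ) ≤ m := le_trans zero_le_one hm
        exact mul_nonneg (mul_nonneg (div_nonneg hm0 hr.le) (hUpos _ hΩ)) (hHpos _ hΩ)
    have h1 : g t₀ ≤ g p.2 :=
      hmono (Set.left_mem_Icc.mpr ht₀) (Set.right_mem_Icc.mpr ht₀) ht₀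
    have h0 : (0:ℝ) ≤ g t₀ := hBnd _ hB
    have : g p.2 = Z p := by
      simp only [hg, hηp]
    linarith [this ▸ (le_trans h0 h1)]
end

section
/- Let M̂ > 0, K̂ > 0 with M̂ ≥ 2K̂ + 2, let T₀ > 0 and ε > 0 with ε·e^{M̂T₀} < 1. Suppose X, Y : [0,T] → ℝ (T ≤ T₀) are differentiable with X(0) > 0, Y(0) > 0, and at any time t where Y(t) = 0 and X(t) ≥ 0 one has Y'(t) ≥ ε e^{M̂t}(M̂ - 2K̂ - ε e^{M̂t}) > 0, and symmetrically at any time where X(t) = 0 and Y(t) ≥ 0 one has X'(t) > 0. Then X(t) > 0 and Y(t) > 0 for all t ∈ [0,T]. -/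
lemma deriv_nonpos_of_left_pos (f : ℝ → ℝ) (f' s : ℝ) (h : HasDerivAt f f' s)
    (hs : 0 < s) (hpos : ∀ u, 0 ≤ u → u < s → 0 < f u) (hfs : f s = 0) : f' ≤ 0 := by
  have hT := hasDerivAt_iff_tendsto_slope.mp h
  have h2 : Filter.Tendsto (slope f s) (nhdsWithin s (Set.Iio s)) (nhds f') :=
    hT.mono_left (nhdsWithin_mono _ (fun x hx => ne_of_lt hx))
  refine le_of_tendsto h2 ?_
  filter_upwards [Ioo_mem_nhdsLT_of_mem (Set.mem_Ioc.mpr ⟨hs, le_refl s⟩)] with x hx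
  have hfx : 0 < f x := hpos x hx.1.le hx.2
  have : slope f s x = f x / (x - s) := by
    simp [slope, hfs]; ring
  rw [this]
  exact div_nonpos_of_nonneg_of_nonpos hfx.le (by linarith [hx.2])

theorem positive_quadrant_invariant (Mh Kh T₀ ε T : ℝ)
    (hKh : 0 < Kh) (hMh : 2 * Kh + 2 ≤ Mh) (hT₀ : 0 < T₀)
    (hε : 0 < ε) (hεT : ε * Real.exp (Mh * T₀) < 1)
    (hT : T ≤ T₀) (hT0 : 0 ≤ T)
    (X Y X' Y' : ℝ → ℝ)
    (hXd : ∀ t ∈ Set.Icc (0 : ℝ) T, HasDerivAt X (X' t) t)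
    (hYd : ∀ t ∈ Set.Icc (0 : ℝ) T, HasDerivAt Y (Y' t) t)
    (hX0 : 0 < X 0) (hY0 : 0 < Y 0)
    (hYb : ∀ t ∈ Set.Icc (0 : ℝ) T, Y t = 0 → 0 ≤ X t →
      ε * Real.exp (Mh * t) * (Mh - 2 * Kh - ε * Real.exp (Mh * t)) ≤ Y' t ∧
      0 < ε * Real.exp (Mh * t) * (Mh - 2 * Kh - ε * Real.exp (Mh * t)))
    (hXb : ∀ t ∈ Set.Icc (0 : ℝ) T, X t = 0 → 0 ≤ Y t → 0 < X' t) :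
    ∀ t ∈ Set.Icc (0 : ℝ) T, 0 < X t ∧ 0 < Y t := by
  set A : Set ℝ := {u | u ∈ Set.Icc (0 : ℝ) T ∧ (X u ≤ 0 ∨ Y u ≤ 0)} with hAdef
  suffices hA : A = ∅ by
    intro t ht
    by_contra hcon
    have htA : t ∈ A := by
      refine ⟨ht, ?_⟩
      rcases not_and_or.mp hcon with h | h
      · exact Or.inl (not_lt.mp h)
      · exact Or.inr (not_lt.mp h)
    rw [hA] at htA; exact htA
  by_contra hAne'
  obtain ⟨t₀, ht₀⟩ := Set.nonempty_iff_ne_empty.mpr hAne'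
  have hbdd : BddBelow A := ⟨0, fun u hu => hu.1.1⟩
  have hAne : A.Nonempty := ⟨t₀, ht₀⟩
  set s := sInf A with hsdef
  have hs0 : 0 ≤ s := le_csInf hAne (fun u hu => hu.1.1)
  have hsT : s ≤ T := le_trans (csInf_le hbdd ht₀) ht₀.1.2
  have hsIcc : s ∈ Set.Icc (0 : ℝ) T := ⟨hs0, hsT⟩
  have hXc : ContinuousAt X s := (hXd s hsIcc).continuousAt
  have hYc : ContinuousAt Y s := (hYd s hsIcc).continuousAt
  have hscl : s ∈ closure A := csInf_mem_closure hAne hbdd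
  have hfreq : ∃ᶠ x in nhds s, x ∈ A := mem_closure_iff_frequently.mp hscl
  have hfreq2 : (∃ᶠ x in nhds s, X x ≤ 0) ∨ (∃ᶠ x in nhds s, Y x ≤ 0) :=
    Filter.frequently_or_distrib.mp (hfreq.mono (fun x hx => hx.2))
  have key : ∀ (f : ℝ → ℝ), ContinuousAt f s → (∃ᶠ x in nhds s, f x ≤ 0) → f s ≤ 0 := by
    intro f hc hf
    by_contra hp
    push_neg at hp
    have hev : ∀ᶠ x in nhds s, 0 < f x := hc.eventually (eventually_gt_nhds hp)
    obtain ⟨x, hx1, hx2⟩ := (hf.and_eventually hev).exists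
    linarith
  have hdisj : X s ≤ 0 ∨ Y s ≤ 0 := by
    rcases hfreq2 with h | h
    · exact Or.inl (key X hXc h)
    · exact Or.inr (key Y hYc h)
  have hspos : 0 < s := by
    rcases hs0.lt_or_eq with h | h
    · exact h
    · exfalso; rw [← h] at hdisj
      rcases hdisj with h' | h' <;> linarith
  have hbefore : ∀ u, 0 ≤ u → u < s → 0 < X u ∧ 0 < Y u := by
    intro u hu hus
    by_contra hcon
    have huA : u ∈ A := by
      refine ⟨⟨hu, le_trans hus.le hsT⟩, ?_⟩
      rcases not_and_or.mp hcon with h | h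
      · exact Or.inl (not_lt.mp h)
      · exact Or.inr (not_lt.mp h)
    exact absurd (csInf_le hbdd huA) (not_le.mpr hus)
  have hleft : ∀ (f : ℝ → ℝ), ContinuousAt f s → (∀ u, 0 ≤ u → u < s → 0 < f u) →
      0 ≤ f s := by
    intro f hc hp
    have htd : Filter.Tendsto f (nhdsWithin s (Set.Iio s)) (nhds (f s)) :=
      hc.tendsto.mono_left nhdsWithin_le_nhds
    refine ge_of_tendsto htd ?_
    filter_upwards [Ioo_mem_nhdsLT_of_mem (Set.mem_Ioc.mpr ⟨hspos, le_refl s⟩)] with x hx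
    exact (hp x hx.1.le hx.2).le
  have hXs : 0 ≤ X s := hleft X hXc (fun u hu hus => (hbefore u hu hus).1)
  have hYs : 0 ≤ Y s := hleft Y hYc (fun u hu hus => (hbefore u hu hus).2)
  rcases hdisj with h | h
  · have hXs0 : X s = 0 := le_antisymm h hXs
    have hd : 0 < X' s := hXb s hsIcc hXs0 hYs
    have hle : X' s ≤ 0 :=
      deriv_nonpos_of_left_pos X (X' s) s (hXd s hsIcc) hspos
        (fun u hu hus => (hbefore u hu hus).1) hXs0
    linarith
  · have hYs0 : Y s = 0 := le_antisymm h hYs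
    obtain ⟨h1, h2⟩ := hYb s hsIcc hYs0 hXs
    have hle : Y' s ≤ 0 :=
      deriv_nonpos_of_left_pos Y (Y' s) s (hYd s hsIcc) hspos
        (fun u hu hus => (hbefore u hu hus).2) hYs0
    linarith
end

section
/- Let b > 0, C₀ > 0, Ĉ > 0, m ∈ {1,2}, 1 < γ < 3, and set σ = m(3-γ)/4 ∈ (0,1). Suppose y : [0,T) → ℝ is differentiable with y(0) < 0 and y'(t) ≤ -((1+γ)/8)·Ĉ·(b/(b+2C₀t))^σ·y(t)² for all t. Then T ≤ t* where t* = (b/(2C₀))·[(1 + (4C₀(4 - m(3-γ)))/((-y(0))(γ+1)Ĉ b))^{4/(4-m(3-γ))} - 1]. -/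
set_option maxHeartbeats 1000000 in
theorem riccati_blowup_time_bound (b C₀ Ch γ T σ : ℝ) (m : ℕ)
    (hm : m = 1 ∨ m = 2)
    (hb : 0 < b) (hC₀ : 0 < C₀) (hCh : 0 < Ch)
    (hγ1 : 1 < γ) (hγ3 : γ < 3)
    (hσ : σ = (m : ℝ) * (3 - γ) / 4)
    (hT : 0 < T)
    (y y' : ℝ → ℝ)
    (hy0 : y 0 < 0)
    (hd : ∀ t ∈ Set.Ico (0 : ℝ) T, HasDerivAt y (y' t) t)
    (hi : ∀ t ∈ Set.Ico (0 : ℝ) T,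
      y' t ≤ -((1 + γ) / 8) * Ch * (b / (b + 2 * C₀ * t)) ^ σ * (y t) ^ 2) :
    T ≤ (b / (2 * C₀)) *
      ((1 + (4 * C₀ * (4 - (m : ℝ) * (3 - γ))) / ((-y 0) * (γ + 1) * Ch * b)) ^
          (4 / (4 - (m : ℝ) * (3 - γ))) - 1) := by
  have hmR : (1:ℝ) ≤ (m:ℝ) ∧ (m:ℝ) ≤ 2 := by
    rcases hm with h | h <;> subst h <;> norm_num
  have hD : 0 < 4 - (m : ℝ) * (3 - γ) := by nlinarith [hmR.1, hmR.2]
  have hσ0 : 0 < σ := by rw [hσ]; nlinarith [hmR.1]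
  have hσ1 : σ < 1 := by rw [hσ]; nlinarith [hmR.2]
  have h1σ : 1 - σ = (4 - (m:ℝ) * (3 - γ)) / 4 := by rw [hσ]; ring
  have hP : ∀ t : ℝ, 0 ≤ t → 0 < b + 2 * C₀ * t := by intro t ht; nlinarith
  have hgpos : ∀ t : ℝ, 0 ≤ t → 0 < (b / (b + 2 * C₀ * t)) ^ σ := fun t ht =>
    Real.rpow_pos_of_pos (div_pos hb (hP t ht)) σ
  -- y is nonpositive-derivative hence antitone on [0,T)
  have hy'le : ∀ t ∈ Set.Ico (0 : ℝ) T, y' t ≤ 0 := by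
    intro t ht
    have h1 : 0 ≤ ((1 + γ) / 8) * Ch * (b / (b + 2 * C₀ * t)) ^ σ * (y t) ^ 2 := by
      have := (hgpos t ht.1).le
      have hsq := sq_nonneg (y t)
      have : 0 ≤ ((1 + γ) / 8) * Ch * (b / (b + 2 * C₀ * t)) ^ σ := by
        apply mul_nonneg (mul_nonneg (by linarith) hCh.le) this
      exact mul_nonneg this hsq
    have := hi t ht
    nlinarith
  have hyc : ContinuousOn y (Set.Ico 0 T) := fun t ht =>
    ((hd t ht).continuousAt).continuousWithinAt
  have hanti : AntitoneOn y (Set.Ico 0 T) := by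
    apply antitoneOn_of_deriv_nonpos (convex_Ico 0 T) hyc
    · intro x hx
      rw [interior_Ico] at hx
      exact ((hd x ⟨hx.1.le, hx.2⟩).differentiableAt).differentiableWithinAt
    · intro x hx
      rw [interior_Ico] at hx
      rw [(hd x ⟨hx.1.le, hx.2⟩).deriv]
      exact hy'le x ⟨hx.1.le, hx.2⟩
  have hyneg : ∀ t ∈ Set.Ico (0 : ℝ) T, y t < 0 := by
    intro t ht
    have := hanti (Set.mem_Ico.mpr ⟨le_refl 0, hT⟩) ht ht.1
    linarith
  -- notation
  set D : ℝ := 4 - (m : ℝ) * (3 - γ) with hDdef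
  set A : ℝ := 1 + 4 * C₀ * D / ((-y 0) * (γ + 1) * Ch * b) with hAdef
  set K : ℝ := ((1 + γ) / 8) * Ch with hKdef
  have hKpos : 0 < K := by
    apply mul_pos (by linarith) hCh
  have hA1 : 1 < A := by
    have hnum : 0 < 4 * C₀ * D := by positivity
    have hden : 0 < (-y 0) * (γ + 1) * Ch * b := by
      apply mul_pos (mul_pos (mul_pos (by linarith) (by linarith)) hCh) hb
    have := div_pos hnum hden
    rw [hAdef]; linarith
  have hA0 : (0:ℝ) ≤ A := by linarith
  set ts : ℝ := (b / (2 * C₀)) * (A ^ (4 / D) - 1) with htsdef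
  have hAe1 : 1 ≤ A ^ (4 / D) := by
    calc (1:ℝ) = 1 ^ (4 / D) := (Real.one_rpow _).symm
    _ ≤ A ^ (4 / D) := Real.rpow_le_rpow (by norm_num) hA1.le (by positivity)
  have hts0 : 0 ≤ ts := by
    apply mul_nonneg (by positivity)
    linarith
  by_contra hc
  push_neg at hc
  have htsT : ts ∈ Set.Ico (0:ℝ) T := ⟨hts0, hc⟩
  -- the auxiliary function
  set G : ℝ → ℝ := fun s => b ^ σ * ((b + 2 * C₀ * s) ^ (1 - σ) - b ^ (1 - σ)) / (2 * C₀ * (1 - σ)) with hGdef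
  set h : ℝ → ℝ := fun s => -(y s)⁻¹ + K * G s with hhdef
  have hhD : ∀ t ∈ Set.Ico (0:ℝ) T,
      HasDerivAt h (y' t / (y t) ^ 2 + K * (b / (b + 2 * C₀ * t)) ^ σ) t := by
    intro t ht
    have hw : HasDerivAt (fun s => -(y s)⁻¹) (y' t / (y t) ^ 2) t := by
      have := ((hd t ht).inv (hyneg t ht).ne).neg
      exact this.congr_deriv (by ring)
    have hPt : HasDerivAt (fun s : ℝ => b + 2 * C₀ * s) (2 * C₀) t := by
      simpa using ((hasDerivAt_id t).const_mul (2 * C₀)).const_add b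
    have hpow : HasDerivAt (fun s : ℝ => (b + 2 * C₀ * s) ^ (1 - σ))
        ((1 - σ) * (b + 2 * C₀ * t) ^ (1 - σ - 1) * (2 * C₀)) t :=
      by have := (Real.hasDerivAt_rpow_const (p := 1 - σ) (Or.inl (hP t ht.1).ne')).comp t hPt; exact this
    have hG : HasDerivAt G
        (b ^ σ * ((1 - σ) * (b + 2 * C₀ * t) ^ (1 - σ - 1) * (2 * C₀)) / (2 * C₀ * (1 - σ))) t := by
      exact ((hpow.sub_const _).const_mul _).div_const _
    have hGval : b ^ σ * ((1 - σ) * (b + 2 * C₀ * t) ^ (1 - σ - 1) * (2 * C₀)) / (2 * C₀ * (1 - σ))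
        = (b / (b + 2 * C₀ * t)) ^ σ := by
      rw [Real.div_rpow hb.le (hP t ht.1).le,
        show (1 - σ - 1) = -σ by ring, Real.rpow_neg (hP t ht.1).le]
      have hx : (0:ℝ) < (b + 2 * C₀ * t) ^ σ := Real.rpow_pos_of_pos (hP t ht.1) σ
      have hσne : (1:ℝ) - σ ≠ 0 := by linarith
      field_simp [hC₀.ne', hx.ne', hσne]
    rw [hGval] at hG
    exact hw.add (hG.const_mul K)
  have hhle : ∀ x ∈ Set.Ico (0:ℝ) T,
      y' x / (y x) ^ 2 + K * (b / (b + 2 * C₀ * x)) ^ σ ≤ 0 := by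
    intro x hx
    have hy2 : 0 < (y x) ^ 2 := by nlinarith [hyneg x hx]
    have h1 : y' x ≤ (-(((1 + γ) / 8 * Ch) * (b / (b + 2 * C₀ * x)) ^ σ)) * (y x) ^ 2 := by
      have := hi x hx
      nlinarith
    have h2 := (div_le_iff₀ hy2).mpr h1
    rw [hKdef]
    linarith
  have hhc : ContinuousOn h (Set.Ico 0 T) := fun t ht =>
    ((hhD t ht).continuousAt).continuousWithinAt
  have hhanti : AntitoneOn h (Set.Ico 0 T) := by
    apply antitoneOn_of_deriv_nonpos (convex_Ico 0 T) hhc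
    · intro x hx
      rw [interior_Ico] at hx
      exact ((hhD x ⟨hx.1.le, hx.2⟩).differentiableAt).differentiableWithinAt
    · intro x hx
      rw [interior_Ico] at hx
      rw [(hhD x ⟨hx.1.le, hx.2⟩).deriv]
      exact hhle x ⟨hx.1.le, hx.2⟩
  have key : h ts ≤ h 0 := hhanti (Set.mem_Ico.mpr ⟨le_refl 0, hT⟩) htsT hts0
  -- compute h 0
  have hG0 : G 0 = 0 := by
    simp only [hGdef]; norm_num
  -- compute G ts
  have hPts : b + 2 * C₀ * ts = b * A ^ (4 / D) := by
    rw [htsdef]; field_simp; ring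
  have hpow_ts : (b * A ^ (4 / D)) ^ (1 - σ) = b ^ (1 - σ) * A := by
    have he1 : (4:ℝ) / D * (1 - σ) = 1 := by
      rw [h1σ]; field_simp
    rw [Real.mul_rpow hb.le (Real.rpow_nonneg hA0 _), ← Real.rpow_mul hA0, he1,
      Real.rpow_one]
  have hGts : K * G ts = -(y 0)⁻¹ := by
    simp only [hGdef]
    rw [hPts, hpow_ts]
    have hbσ : b ^ σ * b ^ (1 - σ) = b := by
      rw [← Real.rpow_add hb]; norm_num
    have h1 : b ^ σ * (b ^ (1 - σ) * A - b ^ (1 - σ)) = b * (A - 1) := by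
      rw [show b ^ σ * (b ^ (1 - σ) * A - b ^ (1 - σ)) = (b ^ σ * b ^ (1 - σ)) * (A - 1) by ring,
        hbσ]
    rw [h1]
    have hA1' : A - 1 = 4 * C₀ * D / ((-y 0) * (γ + 1) * Ch * b) := by rw [hAdef]; ring
    rw [hA1', hKdef]
    have hy0' : y 0 ≠ 0 := hy0.ne
    have h1σ' : 1 - σ = D / 4 := h1σ
    rw [h1σ']
    have hy0n : (0:ℝ) < -y 0 := by linarith
    have hγn : (0:ℝ) < γ + 1 := by linarith
    field_simp [hy0n.ne', hγn.ne', hCh.ne', hb.ne', hC₀.ne', hD.ne']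
    ring
  have hfin : -(y ts)⁻¹ ≤ 0 := by
    have h0 : h 0 = -(y 0)⁻¹ := by rw [hhdef]; simp [hG0]
    have hts' : h ts = -(y ts)⁻¹ + -(y 0)⁻¹ := by rw [hhdef]; simp [hGts]
    rw [h0, hts'] at key
    linarith
  have : 0 < -(y ts)⁻¹ := by
    have := hyneg ts htsT
    have : (y ts)⁻¹ < 0 := inv_lt_zero.mpr this
    linarith
  linarith
end
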